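/- Let E be a row-finite graph and v ∈ E^0. The vertex v has no bifurcation (for every vertex u reachable from v, |s^{-1}(u)| ≤ 1) if and only if v = v(0) is a minimal element of M_E^{gr} (b ≤ v implies v ≤ b). -/

import Mathlib

set_option linter.unusedSectionVars false

/-- The algebraic preorder on a commutative monoid: `a ≤ b` iff `b = a + c` for some `c`. -/
def algLE {M : Type*} [AddCommMonoid M] (a b : M) : Prop := ∃ c, b = a + c

/-- A row-finite directed graph: vertices `V`, edges `Ed`, source `s`, range `r`,
and for each vertex the (finite) set of edges it emits. -/
structure RFGraph (V : Type) (Ed : Type) where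
  s : Ed → V
  r : Ed → V
  emit : V → Finset Ed
  mem_emit : ∀ e v, e ∈ emit v ↔ s e = v

namespace RFGraph

variable {V Ed : Type} [DecidableEq V] (G : RFGraph V Ed)

/-- The one-step rewriting relation `→₁` on the free commutative monoid `Multiset V`:
replace one occurrence of a non-sink vertex `v` by the sum of ranges of edges emitted by `v`. -/
def Step1 (a b : Multiset V) : Prop :=
  ∃ v : V, v ∈ a ∧ G.emit v ≠ ∅ ∧ b = a.erase v + (G.emit v).val.map G.r

/-- The reflexive-transitive closure `→` of `→₁`. -/
def Step : Multiset V → Multiset V → Prop := Relation.ReflTransGen G.Step1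

/-- The congruence on the free commutative monoid generated by `→₁`. -/
def gcon : AddCon (Multiset V) := addConGen G.Step1

/-- The graph monoid `M_E`. -/
def GM := G.gcon.Quotient

instance : AddCommMonoid G.GM := inferInstanceAs (AddCommMonoid G.gcon.Quotient)

/-- One-step rewriting for the talented monoid: replace `v(i)` by `Σ_{e ∈ s⁻¹(v)} r(e)(i+1)`. -/
def TStep1 (a b : Multiset (V × ℤ)) : Prop :=
  ∃ (v : V) (i : ℤ), (v, i) ∈ a ∧ G.emit v ≠ ∅ ∧
    b = a.erase (v, i) + (G.emit v).val.map (fun e => (G.r e, i + 1))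

/-- The congruence generated by the talented one-step relation. -/
def tcon : AddCon (Multiset (V × ℤ)) := addConGen G.TStep1

/-- The talented monoid `M_E^{gr}`. -/
def TM := G.tcon.Quotient

instance : AddCommMonoid G.TM := inferInstanceAs (AddCommMonoid G.tcon.Quotient)

/-- The generator `v(i)` of the talented monoid. -/
def tgen (v : V) (i : ℤ) : G.TM := G.tcon.mk' {(v, i)}

/-- The shift `v(i) ↦ v(i+n)` on the free commutative monoid `Multiset (V × ℤ)`. -/
def shiftMul (n : ℤ) : Multiset (V × ℤ) →+ Multiset (V × ℤ) where
  toFun a := a.map fun p => (p.1, p.2 + n)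
  map_zero' := rfl
  map_add' a b := Multiset.map_add (fun p => (p.1, p.2 + n)) a b

lemma shift_inj (n : ℤ) : Function.Injective (fun p : V × ℤ => (p.1, p.2 + n)) := by
  rintro ⟨a, b⟩ ⟨c, d⟩ h
  simp only [Prod.mk.injEq] at h
  exact Prod.ext h.1 (by omega)

lemma tstep1_shift (n : ℤ) {a b : Multiset (V × ℤ)} (h : G.TStep1 a b) :
    G.TStep1 (shiftMul n a) (shiftMul n b) := by
  obtain ⟨v, i, hv, hne, rfl⟩ := h
  refine ⟨v, i + n, Multiset.mem_map.2 ⟨(v, i), hv, rfl⟩, hne, ?_⟩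
  show Multiset.map _ _ = _
  rw [Multiset.map_add]
  congr 1
  · exact (Multiset.map_erase _ (shift_inj n) (v, i) a)
  · rw [Multiset.map_map]
    congr 1
    funext e
    simp only [Function.comp_apply]
    congr 1
    omega

lemma tcon_shift (n : ℤ) {a b : Multiset (V × ℤ)} (h : G.tcon a b) :
    G.tcon (shiftMul n a) (shiftMul n b) := by
  have hle : addConGen G.TStep1 ≤
      { r := fun a b => G.tcon (shiftMul n a) (shiftMul n b)
        iseqv := ⟨fun _ => G.tcon.refl _, fun h => G.tcon.symm h,
          fun h₁ h₂ => G.tcon.trans h₁ h₂⟩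
        add' := fun h₁ h₂ => by
          simpa only [map_add] using G.tcon.add h₁ h₂ } := by
    refine AddCon.addConGen_le.2 fun x y hxy => ?_
    exact AddConGen.Rel.of _ _ (G.tstep1_shift n hxy)
  exact hle h

/-- The `ℤ`-action on the talented monoid, `ⁿ(v(i)) = v(i+n)`. -/
def tshift (n : ℤ) : G.TM →+ G.TM :=
  G.tcon.lift (G.tcon.mk'.comp (shiftMul n)) (by
    intro a b h
    show G.tcon.mk' (shiftMul n a) = G.tcon.mk' (shiftMul n b)
    exact (AddCon.eq _).2 (G.tcon_shift n h))

/-- Reachability: there is a (possibly trivial) path from `u` to `v`. -/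
def Reaches (u v : V) : Prop :=
  Relation.ReflTransGen (fun a b => ∃ e : Ed, G.s e = a ∧ G.r e = b) u v

/-- A cycle: a nonempty path of edges, closed up, with distinct source vertices. -/
def IsCycle (p : List Ed) : Prop :=
  ∃ h : p ≠ [], List.Chain' (fun e f => G.r e = G.s f) p ∧
    G.r (p.getLast h) = G.s (p.head h) ∧ (p.map G.s).Nodup

/-- The cycle `p` has an exit: some vertex on it emits an edge not on the cycle. -/
def HasExit (p : List Ed) : Prop :=
  ∃ e : Ed, (∃ f ∈ p, G.s e = G.s f) ∧ e ∉ p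

/-- The cycle `p` has no exit: every vertex on it emits exactly its cycle edge. -/
def NoExit (p : List Ed) : Prop :=
  ∀ e ∈ p, G.emit (G.s e) = {e}

/-- `ℤ`-order-ideals of the talented monoid. -/
def IsOrderIdeal (I : Set G.TM) : Prop :=
  (0 : G.TM) ∈ I ∧ (∀ a b : G.TM, a ∈ I → b ∈ I → a + b ∈ I) ∧
    (∀ (n : ℤ) (a : G.TM), a ∈ I → G.tshift n a ∈ I) ∧
    (∀ a b : G.TM, algLE a b → b ∈ I → a ∈ I)

/-- The smallest `ℤ`-order-ideal of `M_E^{gr}` containing `v(0)`. -/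
def genIdeal (v : V) : Set G.TM :=
  ⋂₀ {I : Set G.TM | G.IsOrderIdeal I ∧ G.tgen v 0 ∈ I}

/-- Minimality in the talented monoid: `0 ≠ b ≤ a` implies `a ≤ b`. -/
def TMin (a : G.TM) : Prop := ∀ b : G.TM, b ≠ 0 → algLE b a → algLE a b

/-- The covering graph `\bar E`. -/
def cover : RFGraph (V × ℤ) (Ed × ℤ) where
  s p := (G.s p.1, p.2)
  r p := (G.r p.1, p.2 + 1)
  emit p := (G.emit p.1).map ⟨fun e => (e, p.2), fun a b h => by
    simpa using congrArg Prod.fst h⟩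
  mem_emit := by
    rintro ⟨e, n⟩ ⟨v, m⟩
    simp only [Finset.mem_map, Function.Embedding.coeFn_mk, Prod.mk.injEq, G.mem_emit]
    constructor
    · rintro ⟨a, ha, rfl, rfl⟩; exact ⟨ha, rfl⟩
    · rintro ⟨rfl, rfl⟩; exact ⟨e, rfl, rfl⟩

/-- The set of vertices on a cycle. -/
def cycVerts (p : List Ed) : Set V := {v | ∃ e ∈ p, G.s e = v}

end RFGraph

namespace RFGraph

variable {V Ed : Type} [DecidableEq V] (G : RFGraph V Ed)

/-- The replacement multiset for `(v, i)`. -/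
def repl (v : V) (i : ℤ) : Multiset (V × ℤ) := (G.emit v).val.map (fun e => (G.r e, i + 1))

lemma tstep1_mk {a : Multiset (V × ℤ)} {w : V} {i : ℤ} (hm : (w, i) ∈ a)
    (hne : G.emit w ≠ ∅) : G.TStep1 a (a.erase (w, i) + G.repl w i) :=
  ⟨w, i, hm, hne, rfl⟩

lemma tstep1_elim {a b : Multiset (V × ℤ)} (h : G.TStep1 a b) :
    ∃ (w : V) (i : ℤ), (w, i) ∈ a ∧ G.emit w ≠ ∅ ∧ b = a.erase (w, i) + G.repl w i := h

/-- The reflexive transitive closure of the talented one-step relation. -/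
def TStep : Multiset (V × ℤ) → Multiset (V × ℤ) → Prop := Relation.ReflTransGen G.TStep1

lemma tstep1_add {a b c : Multiset (V × ℤ)} (h : G.TStep1 a b) :
    G.TStep1 (a + c) (b + c) := by
  obtain ⟨w, i, hm, hne, rfl⟩ := G.tstep1_elim h
  have := G.tstep1_mk (a := a + c) (Multiset.mem_add.2 (Or.inl hm)) hne
  rwa [Multiset.erase_add_left_pos _ hm, add_right_comm] at this

lemma tstep_add {a b c : Multiset (V × ℤ)} (h : G.TStep a b) :
    G.TStep (a + c) (b + c) := by
  induction h with
  | refl => exact Relation.ReflTransGen.refl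
  | tail _ hst ih => exact ih.tail (G.tstep1_add hst)

lemma tstep_add_both {a b c d : Multiset (V × ℤ)} (h₁ : G.TStep a b) (h₂ : G.TStep c d) :
    G.TStep (a + c) (b + d) := by
  refine (G.tstep_add h₁).trans ?_
  rw [add_comm b c, add_comm b d]
  exact G.tstep_add h₂

lemma repl_card_pos {w : V} (hne : G.emit w ≠ ∅) (i : ℤ) :
    0 < Multiset.card (G.repl w i) := by
  rw [repl, Multiset.card_map, Multiset.card_pos]
  exact fun h0 => hne (Finset.val_eq_zero.1 h0)

lemma tstep1_card {a b : Multiset (V × ℤ)} (h : G.TStep1 a b) :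
    Multiset.card a ≤ Multiset.card b := by
  obtain ⟨w, i, hm, hne, rfl⟩ := G.tstep1_elim h
  have h1 := G.repl_card_pos hne i
  have h2 : Multiset.card (a.erase (w, i)) = Multiset.card a - 1 :=
    Multiset.card_erase_of_mem hm
  have h3 : 0 < Multiset.card a := Multiset.card_pos.2 fun h0 => by simp [h0] at hm
  rw [Multiset.card_add, h2]
  omega

lemma tstep_card {a b : Multiset (V × ℤ)} (h : G.TStep a b) :
    Multiset.card a ≤ Multiset.card b := by
  induction h with
  | refl => exact le_refl _
  | tail _ hst ih => exact ih.trans (G.tstep1_card hst)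

lemma tstep_zero {z : Multiset (V × ℤ)} (h : G.TStep 0 z) : z = 0 := by
  rcases Relation.ReflTransGen.cases_head h with rfl | ⟨b, hb, _⟩
  · rfl
  · obtain ⟨w, i, hm, -, -⟩ := G.tstep1_elim hb
    exact absurd hm (Multiset.notMem_zero _)

/-- Splitting of reductions from a sum. -/
lemma tstep_split {a c z : Multiset (V × ℤ)} (h : G.TStep (a + c) z) :
    ∃ x y, G.TStep a x ∧ G.TStep c y ∧ z = x + y := by
  induction h with
  | refl => exact ⟨a, c, Relation.ReflTransGen.refl, Relation.ReflTransGen.refl, rfl⟩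
  | tail _ hst ih =>
    obtain ⟨x, y, hax, hcy, rfl⟩ := ih
    obtain ⟨w, i, hm, hne, rfl⟩ := G.tstep1_elim hst
    rcases Multiset.mem_add.1 hm with hx | hy
    · refine ⟨x.erase (w, i) + G.repl w i, y, hax.tail (G.tstep1_mk hx hne), hcy, ?_⟩
      rw [Multiset.erase_add_left_pos _ hx, add_right_comm]
    · refine ⟨x, y.erase (w, i) + G.repl w i, hax, hcy.tail (G.tstep1_mk hy hne), ?_⟩
      rw [Multiset.erase_add_right_pos _ hy, add_assoc]

/-- Local confluence (diamond property up to equality). -/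
lemma tstep1_diamond {a b c : Multiset (V × ℤ)} (h₁ : G.TStep1 a b) (h₂ : G.TStep1 a c) :
    b = c ∨ ∃ d, G.TStep1 b d ∧ G.TStep1 c d := by
  obtain ⟨w, i, hw, hwe, rfl⟩ := G.tstep1_elim h₁
  obtain ⟨x, j, hx, hxe, rfl⟩ := G.tstep1_elim h₂
  by_cases hpq : (x, j) = (w, i)
  · left
    rw [hpq]
    injection hpq with h1 h2
    rw [h1, h2]
  · right
    have hx' : (x, j) ∈ a.erase (w, i) := (Multiset.mem_erase_of_ne hpq).2 hx
    have hw' : (w, i) ∈ a.erase (x, j) :=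
      (Multiset.mem_erase_of_ne fun h => hpq h.symm).2 hw
    refine ⟨((a.erase (w, i)).erase (x, j) + G.repl w i) + G.repl x j, ?_, ?_⟩
    · have := G.tstep1_mk (a := a.erase (w, i) + G.repl w i)
        (Multiset.mem_add.2 (Or.inl hx')) hxe
      rwa [Multiset.erase_add_left_pos _ hx'] at this
    · have := G.tstep1_mk (a := a.erase (x, j) + G.repl x j)
        (Multiset.mem_add.2 (Or.inl hw')) hwe
      rw [Multiset.erase_add_left_pos _ hw'] at this
      have heq : (a.erase (x, j)).erase (w, i) + G.repl x j + G.repl w i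
          = ((a.erase (w, i)).erase (x, j) + G.repl w i) + G.repl x j := by
        rw [Multiset.erase_comm]
        abel
      rwa [heq] at this

lemma tstep1_church : ∀ a b c : Multiset (V × ℤ), G.TStep1 a b → G.TStep1 a c →
    ∃ d, Relation.ReflGen G.TStep1 b d ∧ Relation.ReflTransGen G.TStep1 c d := by
  intro a b c h₁ h₂
  rcases G.tstep1_diamond h₁ h₂ with rfl | ⟨d, hbd, hcd⟩
  · exact ⟨b, Relation.ReflGen.refl, Relation.ReflTransGen.refl⟩
  · exact ⟨d, Relation.ReflGen.single hbd, Relation.ReflTransGen.single hcd⟩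

lemma join_equiv : Equivalence (Relation.Join G.TStep) :=
  Relation.equivalence_join_reflTransGen G.tstep1_church

/-- The congruence whose relation is joinability. -/
def joinCon : AddCon (Multiset (V × ℤ)) where
  r := Relation.Join G.TStep
  iseqv := G.join_equiv
  add' := by
    rintro a b c d ⟨z, haz, hbz⟩ ⟨w, hcw, hdw⟩
    exact ⟨z + w, G.tstep_add_both haz hcw, G.tstep_add_both hbz hdw⟩

lemma tstep1_tcon {a b : Multiset (V × ℤ)} (h : G.TStep1 a b) : G.tcon a b :=
  AddConGen.Rel.of _ _ h

lemma tstep_tcon {a b : Multiset (V × ℤ)} (h : G.TStep a b) : G.tcon a b := by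
  induction h with
  | refl => exact G.tcon.refl _
  | tail _ hst ih => exact G.tcon.trans ih (G.tstep1_tcon hst)

lemma tcon_iff_join {a b : Multiset (V × ℤ)} :
    G.tcon a b ↔ Relation.Join G.TStep a b := by
  constructor
  · intro h
    have hle : addConGen G.TStep1 ≤ G.joinCon :=
      AddCon.addConGen_le.2 fun x y hxy =>
        ⟨y, Relation.ReflTransGen.single hxy, Relation.ReflTransGen.refl⟩
    exact hle h
  · rintro ⟨z, haz, hbz⟩
    exact G.tcon.trans (G.tstep_tcon haz) (G.tcon.symm (G.tstep_tcon hbz))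

open scoped Classical in
/-- Full development of a single generator up to level `N`. -/
noncomputable def phiP (N : ℤ) (p : V × ℤ) : Multiset (V × ℤ) :=
  if G.emit p.1 = ∅ ∨ N ≤ p.2 then {p}
  else (G.emit p.1).val.bind (fun e => phiP N (G.r e, p.2 + 1))
termination_by (N - p.2).toNat
decreasing_by
  rename_i h
  push_neg at h
  omega

lemma phiP_card_pos (N : ℤ) (p : V × ℤ) : 0 < Multiset.card (G.phiP N p) := by
  unfold phiP
  split_ifs with h
  · simp
  · push_neg at h
    obtain ⟨h1, -⟩ := h
    have hval : (G.emit p.1).val ≠ 0 := fun h0 => h1.ne_empty (Finset.val_eq_zero.1 h0)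
    obtain ⟨e, he⟩ := Multiset.exists_mem_of_ne_zero hval
    have hrec := phiP_card_pos N (G.r e, p.2 + 1)
    have hne0 : G.phiP N (G.r e, p.2 + 1) ≠ 0 := by
      intro h0; rw [h0] at hrec; simp at hrec
    obtain ⟨q, hq⟩ := Multiset.exists_mem_of_ne_zero hne0
    have hmem : q ∈ (G.emit p.1).val.bind (fun e => G.phiP N (G.r e, p.2 + 1)) :=
      Multiset.mem_bind.2 ⟨e, he, hq⟩
    exact Multiset.card_pos.2 fun h0 => by rw [h0] at hmem; exact Multiset.notMem_zero _ hmem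
termination_by (N - p.2).toNat
decreasing_by
  push_neg at h
  omega

/-- Full development of a multiset up to level `N`. -/
noncomputable def phiM (N : ℤ) (a : Multiset (V × ℤ)) : Multiset (V × ℤ) := a.bind (G.phiP N)

lemma phiM_cons (N : ℤ) (p : V × ℤ) (s : Multiset (V × ℤ)) :
    G.phiM N (p ::ₘ s) = G.phiP N p + G.phiM N s := Multiset.cons_bind _ _ _

lemma phiM_add (N : ℤ) (a b : Multiset (V × ℤ)) :
    G.phiM N (a + b) = G.phiM N a + G.phiM N b := Multiset.add_bind a b _

lemma phiM_ne_zero (N : ℤ) {a : Multiset (V × ℤ)} (ha : a ≠ 0) : G.phiM N a ≠ 0 := by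
  obtain ⟨p, hp⟩ := Multiset.exists_mem_of_ne_zero ha
  have hrec := G.phiP_card_pos N p
  have hne0 : G.phiP N p ≠ 0 := by intro h0; rw [h0] at hrec; simp at hrec
  obtain ⟨q, hq⟩ := Multiset.exists_mem_of_ne_zero hne0
  have hmem : q ∈ G.phiM N a := Multiset.mem_bind.2 ⟨p, hp, hq⟩
  exact fun h0 => by rw [h0] at hmem; exact Multiset.notMem_zero _ hmem

lemma phiP_expand {N : ℤ} {w : V} {i : ℤ} (hne : G.emit w ≠ ∅) (hi : i < N) :
    G.phiP N (w, i) = G.phiM N (G.repl w i) := by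
  unfold phiP
  rw [if_neg (by push_neg; exact ⟨Finset.nonempty_iff_ne_empty.2 hne, by omega⟩)]
  show _ = (G.repl w i).bind (G.phiP N)
  rw [repl, Multiset.bind_map]

lemma tstep_phiM {a b : Multiset (V × ℤ)} (h : G.TStep a b) :
    ∃ N₀ : ℤ, ∀ N, N₀ ≤ N → G.phiM N a = G.phiM N b := by
  induction h with
  | refl => exact ⟨0, fun _ _ => rfl⟩
  | tail _ hst ih =>
    obtain ⟨N₀, hI⟩ := ih
    obtain ⟨w, i, hm, hne, rfl⟩ := G.tstep1_elim hst
    refine ⟨max N₀ (i + 1), fun N hN => ?_⟩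
    rw [hI N (le_trans (le_max_left _ _) hN)]
    conv_lhs => rw [← Multiset.cons_erase hm]
    rw [G.phiM_cons, G.phiM_add, G.phiP_expand hne (by omega), add_comm]

/-- Key cancellation property: `a ~ a + x` forces `x = 0`. -/
lemma no_absorb {a x : Multiset (V × ℤ)} (h : G.tcon a (a + x)) : x = 0 := by
  by_contra hx
  obtain ⟨z, haz, haxz⟩ := G.tcon_iff_join.1 h
  obtain ⟨z₁, z₂, haz₁, hxz₂, rfl⟩ := G.tstep_split haxz
  have hz₂ : z₂ ≠ 0 := by
    intro h0
    have hc := G.tstep_card hxz₂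
    rw [h0] at hc
    simp only [Multiset.card_zero, Nat.le_zero, Multiset.card_eq_zero] at hc
    exact hx hc
  obtain ⟨N₁, h₁⟩ := G.tstep_phiM haz
  obtain ⟨N₂, h₂⟩ := G.tstep_phiM haz₁
  have e₁ := h₁ (max N₁ N₂) (le_max_left _ _)
  have e₂ := h₂ (max N₁ N₂) (le_max_right _ _)
  rw [G.phiM_add] at e₁
  have hne := G.phiM_ne_zero (max N₁ N₂) hz₂
  rw [← Multiset.card_pos] at hne
  have c₁ := congrArg Multiset.card e₁
  have c₂ := congrArg Multiset.card e₂
  rw [Multiset.card_add] at c₁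
  omega

/-- Reaching a vertex gives a reduction exposing it. -/
lemma reach_tstep {v u : V} (h : G.Reaches v u) :
    ∃ (k : ℤ) (D : Multiset (V × ℤ)), G.TStep {(v, 0)} ({(u, k)} + D) := by
  induction h with
  | refl => exact ⟨0, 0, by rw [add_zero]; exact Relation.ReflTransGen.refl⟩
  | tail _ hedge ih =>
    obtain ⟨k, D, hS⟩ := ih
    obtain ⟨e, hse, hre⟩ := hedge
    rename_i a b _
    have hmem : e ∈ G.emit a := (G.mem_emit e a).2 hse
    have hne : G.emit a ≠ ∅ := Finset.ne_empty_of_mem hmem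
    have hmem' : (b, k + 1) ∈ G.repl a k := by
      rw [repl]
      exact Multiset.mem_map.2 ⟨e, hmem, by rw [hre]⟩
    obtain ⟨rest, hrest⟩ := Multiset.exists_cons_of_mem hmem'
    have hstep := G.tstep1_mk (a := {(a, k)} + D)
      (Multiset.mem_add.2 (Or.inl (Multiset.mem_singleton.2 rfl))) hne
    refine ⟨k + 1, rest + D, hS.tail ?_⟩
    have heq : ({(a, k)} + D).erase (a, k) + G.repl a k = {(b, k + 1)} + (rest + D) := by
      rw [Multiset.erase_add_left_pos _ (Multiset.mem_singleton.2 rfl),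
        Multiset.erase_singleton, zero_add, hrest, ← Multiset.singleton_add]
      abel
    rw [← heq]
    exact hstep

/-- With no bifurcations, all reducts of the singleton are singletons. -/
lemma nobif_run {v : V} (hv : ∀ u, G.Reaches v u → (G.emit u).card ≤ 1)
    {z : Multiset (V × ℤ)} (h : G.TStep {(v, 0)} z) :
    ∃ u k, z = {(u, k)} ∧ G.Reaches v u := by
  induction h with
  | refl => exact ⟨v, 0, rfl, Relation.ReflTransGen.refl⟩
  | tail _ hst ih =>
    obtain ⟨u, k, rfl, hru⟩ := ih
    obtain ⟨x, j, hm, hne, rfl⟩ := G.tstep1_elim hst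
    rw [Multiset.mem_singleton] at hm
    injection hm with hm1 hm2
    subst hm1; subst hm2
    have hcard : (G.emit x).card = 1 := by
      have h1 := hv x hru
      have h2 : 0 < (G.emit x).card := Finset.card_pos.2 (Finset.nonempty_iff_ne_empty.2 hne)
      omega
    obtain ⟨e, he⟩ := Finset.card_eq_one.1 hcard
    refine ⟨G.r e, j + 1, ?_,
      hru.tail ⟨e, (G.mem_emit e x).1 (he ▸ Finset.mem_singleton_self e), rfl⟩⟩
    rw [Multiset.erase_singleton, zero_add, repl, he]
    rfl

lemma tcon_zero {a : Multiset (V × ℤ)} (h : G.tcon a 0) : a = 0 := by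
  obtain ⟨z, haz, h0z⟩ := G.tcon_iff_join.1 h
  rw [G.tstep_zero h0z] at haz
  have := G.tstep_card haz
  simpa using this

lemma mk'_eq {a b : Multiset (V × ℤ)} : G.tcon.mk' a = G.tcon.mk' b ↔ G.tcon a b :=
  AddCon.eq _

end RFGraph

/-- A vertex `v` has no bifurcation (every vertex reachable from `v` emits at most one
edge) if and only if `v = v(0)` is a minimal element of `M_E^{gr}`. -/
theorem no_bifurcation_iff_minimal {V Ed : Type} [DecidableEq V] (G : RFGraph V Ed)
    (v : V) :
    (∀ u : V, G.Reaches v u → (G.emit u).card ≤ 1) ↔ G.TMin (G.tgen v 0) := by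
  constructor
  · intro hnb b hb0 hle
    obtain ⟨c, hc⟩ := hle
    obtain ⟨B, rfl⟩ := AddCon.mk'_surjective b
    obtain ⟨C, rfl⟩ := AddCon.mk'_surjective c
    have hcon : G.tcon {(v, 0)} (B + C) := G.mk'_eq.1 hc
    obtain ⟨z, hz1, hz2⟩ := G.tcon_iff_join.1 hcon
    obtain ⟨u, k, rfl, -⟩ := G.nobif_run hnb hz1
    obtain ⟨x, y, hBx, hCy, hxy⟩ := G.tstep_split hz2
    have hB0 : B ≠ 0 := by
      rintro rfl
      exact hb0 (map_zero G.tcon.mk')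
    have hx0 : 0 < Multiset.card x :=
      lt_of_lt_of_le (Multiset.card_pos.2 hB0) (G.tstep_card hBx)
    have hy0 : y = 0 := by
      have hcards := congrArg Multiset.card hxy
      rw [Multiset.card_add, Multiset.card_singleton] at hcards
      rw [← Multiset.card_eq_zero]
      omega
    have hC0 : C = 0 := by
      rw [hy0] at hCy
      have := G.tstep_card hCy
      simpa using this
    rw [hC0, map_zero] at hc
    have hc' : G.tgen v 0 = G.tcon.mk' B := hc.trans (add_zero _)
    exact ⟨0, hc'.symm.trans (add_zero (G.tgen v 0)).symm⟩
  · intro hmin u hru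
    by_contra hcard
    push_neg at hcard
    obtain ⟨e₁, he₁, e₂, he₂, hne12⟩ := Finset.one_lt_card.1 hcard
    obtain ⟨k, D, hS⟩ := G.reach_tstep hru
    have hne : G.emit u ≠ ∅ := Finset.ne_empty_of_mem he₁
    have hm1 : (G.r e₁, k + 1) ∈ G.repl u k := Multiset.mem_map.2 ⟨e₁, he₁, rfl⟩
    obtain ⟨rest, hrest⟩ := Multiset.exists_cons_of_mem hm1
    have hrest0 : rest ≠ 0 := by
      have h2 : 1 < Multiset.card (G.repl u k) := by
        rw [RFGraph.repl, Multiset.card_map]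
        exact hcard
      rw [hrest, Multiset.card_cons] at h2
      rw [← Multiset.card_pos] at *
      omega
    have hstep : G.TStep1 ({(u, k)} + D)
        (({(u, k)} + D).erase (u, k) + G.repl u k) :=
      ⟨u, k, Multiset.mem_add.2 (Or.inl (Multiset.mem_singleton.2 rfl)), hne, rfl⟩
    have heq : ({(u, k)} + D).erase (u, k) + G.repl u k
        = {(G.r e₁, k + 1)} + (rest + D) := by
      rw [Multiset.erase_add_left_pos _ (Multiset.mem_singleton.2 rfl),
        Multiset.erase_singleton, zero_add, hrest, ← Multiset.singleton_add]
      abel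
    have hred : G.TStep {(v, 0)} ({(G.r e₁, k + 1)} + (rest + D)) :=
      hS.tail (heq ▸ hstep)
    have hb : G.tcon {(v, 0)} ({(G.r e₁, k + 1)} + (rest + D)) := G.tstep_tcon hred
    have hb0 : (G.tcon.mk' {(G.r e₁, k + 1)} : G.TM) ≠ 0 := by
      intro h0
      have h1 : G.tcon {(G.r e₁, k + 1)} 0 :=
        G.mk'_eq.1 (h0.trans (map_zero G.tcon.mk').symm)
      simpa using G.tcon_zero h1
    have hle : algLE (G.tcon.mk' {(G.r e₁, k + 1)}) (G.tgen v 0) :=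
      ⟨G.tcon.mk' (rest + D), G.mk'_eq.2 hb⟩
    obtain ⟨d, hd⟩ := hmin _ hb0 hle
    obtain ⟨Dd, rfl⟩ := AddCon.mk'_surjective d
    have h2 : G.tcon {(G.r e₁, k + 1)} ({(v, 0)} + Dd) := G.mk'_eq.1 hd
    have h3 : G.tcon {(v, 0)} (({(v, 0)} + Dd) + (rest + D)) :=
      G.tcon.trans hb (G.tcon.add h2 (G.tcon.refl (rest + D)))
    rw [add_assoc] at h3
    have h4 := G.no_absorb h3
    have := congrArg Multiset.card h4
    simp only [Multiset.card_add, Multiset.card_zero] at this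
    rw [← Multiset.card_pos] at hrest0
    omega
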